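/- arXiv:2510.00121 — 5 statements merged into one kernel-verified Lean document; each statement's English description precedes it below -/
import Mathlib

section
/- Let X be a metrizable compact convex subset of a locally convex space E. Then there exists a continuous strictly convex function f : X → ℝ. -/
open Set

/-- Separating continuous linear functionals for distinct points of a metrizable subset. -/
theorem aux_sep_functional (E : Type*) [AddCommGroup E] [Module ℝ E]
    [TopologicalSpace E] [IsTopologicalAddGroup E] [ContinuousSMul ℝ E]
    [LocallyConvexSpace ℝ E] (X : Set E)
    [TopologicalSpace.MetrizableSpace X] (x y : E) (hx : x ∈ X) (hy : y ∈ X) (hxy : x ≠ y) :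
    ∃ L : E →L[ℝ] ℝ, L x ≠ L y := by
  have hins : ¬ Inseparable x y := by
    letI := TopologicalSpace.metrizableSpaceMetric X
    intro h
    have h2 : Inseparable (⟨x, hx⟩ : X) ⟨y, hy⟩ :=
      (Topology.IsInducing.subtypeVal.inseparable_iff).mp h
    exact hxy (congrArg Subtype.val h2.eq)
  have hcl : x ∉ closure ({y} : Set E) := by
    intro h
    exact hins ((specializes_iff_mem_closure.mpr h).inseparable).symm
  obtain ⟨f, u, h1, h2⟩ := geometric_hahn_banach_point_closed
    ((convex_singleton y).closure) isClosed_closure hcl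
  refine ⟨f, fun h => ?_⟩
  have := h2 y (subset_closure rfl)
  rw [h] at h1; exact lt_asymm h1 this

/-- On a metrizable compact convex subset of a locally convex space there exists a
continuous strictly convex real function. -/
theorem exists_continuous_strictConvexOn (E : Type*) [AddCommGroup E] [Module ℝ E]
    [TopologicalSpace E] [IsTopologicalAddGroup E] [ContinuousSMul ℝ E]
    [LocallyConvexSpace ℝ E] (X : Set E) (hXc : IsCompact X) (hXconv : Convex ℝ X)
    [TopologicalSpace.MetrizableSpace X] :
    ∃ f : E → ℝ, ContinuousOn f X ∧ StrictConvexOn ℝ X f := by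
  letI := TopologicalSpace.metrizableSpaceMetric X
  haveI : CompactSpace X := isCompact_iff_compactSpace.mp hXc
  -- a countable family of functionals separating points of `X`
  set U : (E →L[ℝ] ℝ) → Set (X × X) := fun L => {p | L (p.1 : E) ≠ L (p.2 : E)} with hU
  have hUopen : ∀ L, IsOpen (U L) := by
    intro L
    exact isOpen_ne_fun
      ((L.continuous.comp continuous_subtype_val).comp continuous_fst)
      ((L.continuous.comp continuous_subtype_val).comp continuous_snd)
  obtain ⟨T, hTc, hTU⟩ := TopologicalSpace.isOpen_iUnion_countable U hUopen
  obtain ⟨e, he⟩ := (hTc.insert 0).exists_eq_range (insert_nonempty _ _)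
  have hsep : ∀ x ∈ X, ∀ y ∈ X, x ≠ y → ∃ n, e n x ≠ e n y := by
    intro x hx y hy hxy
    obtain ⟨L, hL⟩ := aux_sep_functional E X x y hx hy hxy
    have hmem : (⟨⟨x, hx⟩, ⟨y, hy⟩⟩ : X × X) ∈ ⋃ i, U i := mem_iUnion.mpr ⟨L, hL⟩
    rw [← hTU] at hmem
    obtain ⟨L', hL'T, hmem'⟩ := mem_iUnion₂.mp hmem
    have hrange : L' ∈ range e := by rw [← he]; exact mem_insert_of_mem _ hL'T
    obtain ⟨n, rfl⟩ := hrange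
    exact ⟨n, hmem'⟩
  -- bounds on the functionals over the compact set
  choose C hC using fun n => hXc.exists_bound_of_continuousOn (e n).continuous.continuousOn
  set c : ℕ → ℝ := fun n => (1 + C n ^ 2)⁻¹ with hc
  have hcpos : ∀ n, 0 < c n := fun n => inv_pos.mpr (by positivity)
  set t : ℕ → E → ℝ := fun n z => (1 / 2 : ℝ) ^ n * (c n * e n z ^ 2) with ht
  have htnonneg : ∀ n z, 0 ≤ t n z := by
    intro n z
    have := (hcpos n).le
    positivity
  have htle : ∀ n, ∀ z ∈ X, t n z ≤ (1 / 2 : ℝ) ^ n := by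
    intro n z hz
    have h1 : |e n z| ≤ C n := by simpa [Real.norm_eq_abs] using hC n z hz
    have h2 : e n z ^ 2 ≤ C n ^ 2 := by nlinarith [abs_nonneg (e n z), sq_abs (e n z)]
    have h3 : c n * e n z ^ 2 ≤ 1 := by
      rw [hc]
      have h4 : (0:ℝ) < 1 + C n ^ 2 := by positivity
      rw [inv_mul_le_iff₀ h4]
      nlinarith
    calc t n z ≤ (1 / 2 : ℝ) ^ n * 1 := by
          rw [ht]
          exact mul_le_mul_of_nonneg_left h3 (by positivity)
      _ = (1 / 2 : ℝ) ^ n := mul_one _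
  have hsummable : ∀ z ∈ X, Summable fun n => t n z := fun z hz =>
    Summable.of_nonneg_of_le (fun n => htnonneg n z) (fun n => htle n z hz)
      (summable_geometric_of_lt_one (by norm_num) (by norm_num))
  refine ⟨fun z => ∑' n, t n z, ?_, ?_⟩
  · rw [continuousOn_iff_continuous_restrict]
    have heq : (X.domRestrict fun z => ∑' n, t n z) = fun p : X => ∑' n, t n (p : E) := rfl
    rw [heq]
    refine continuous_tsum (u := fun n => (1 / 2 : ℝ) ^ n) (fun n => ?_) ?_ ?_
    · exact continuous_const.mul (continuous_const.mul
        (((e n).continuous.comp continuous_subtype_val).pow 2))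
    · exact summable_geometric_of_lt_one (by norm_num) (by norm_num)
    · intro n p
      rw [Real.norm_of_nonneg (htnonneg n p)]
      exact htle n p p.2
  · refine ⟨hXconv, ?_⟩
    intro x hx y hy hxy a b ha hb hab
    have hz : a • x + b • y ∈ X := hXconv hx hy ha.le hb.le hab
    obtain ⟨n₀, hn₀⟩ := hsep x hx y hy hxy
    have heval : ∀ n, e n (a • x + b • y) = a * e n x + b * e n y := by
      intro n
      rw [map_add, map_smul, map_smul, smul_eq_mul, smul_eq_mul]
    have key : ∀ n, t n (a • x + b • y) ≤ a * t n x + b * t n y := by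
      intro n
      have hsq : (a * e n x + b * e n y) ^ 2 ≤ a * e n x ^ 2 + b * e n y ^ 2 := by
        have := (Even.convexOn_pow (𝕜 := ℝ) even_two).2 (mem_univ (e n x))
          (mem_univ (e n y)) ha.le hb.le hab
        simpa [smul_eq_mul] using this
      have hk : (0:ℝ) ≤ (1 / 2 : ℝ) ^ n * c n := by
        have := (hcpos n).le; positivity
      have := mul_le_mul_of_nonneg_left hsq hk
      rw [ht]
      dsimp only
      rw [heval n]
      nlinarith [this]
    have keyn₀ : t n₀ (a • x + b • y) < a * t n₀ x + b * t n₀ y := by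
      have hsq : (a * e n₀ x + b * e n₀ y) ^ 2 < a * e n₀ x ^ 2 + b * e n₀ y ^ 2 := by
        have := (Even.strictConvexOn_pow (even_two) (two_ne_zero)).2 (mem_univ (e n₀ x))
          (mem_univ (e n₀ y)) hn₀ ha hb hab
        simpa [smul_eq_mul] using this
      have hk : (0:ℝ) < (1 / 2 : ℝ) ^ n₀ * c n₀ := by
        have := hcpos n₀; positivity
      have := mul_lt_mul_of_pos_left hsq hk
      rw [ht]
      dsimp only
      rw [heval n₀]
      nlinarith [this]
    have hgsum : Summable fun n => a * t n x + b * t n y :=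
      ((hsummable x hx).mul_left a).add ((hsummable y hy).mul_left b)
    have hlt := Summable.tsum_lt_tsum_of_nonneg (fun n => htnonneg n _) key keyn₀ hgsum
    calc (∑' n, t n (a • x + b • y)) < ∑' n, (a * t n x + b * t n y) := hlt
      _ = a * ∑' n, t n x + b * ∑' n, t n y := by
          rw [Summable.tsum_add ((hsummable x hx).mul_left a) ((hsummable y hy).mul_left b),
            tsum_mul_left, tsum_mul_left]
      _ = a • (∑' n, t n x) + b • (∑' n, t n y) := by simp [smul_eq_mul]
end

section
/- Let X be a metrizable compact convex subset of a locally convex space E, f : X → ℝ a continuous strictly convex function, and f̄ its upper envelope (infimum of continuous affine majorants). Then every point x ∈ X with f(x) = f̄(x) is an extreme point of X. -/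
open Set

variable {E : Type*} [AddCommGroup E] [Module ℝ E] [TopologicalSpace E]
  [IsTopologicalAddGroup E] [ContinuousSMul ℝ E] [LocallyConvexSpace ℝ E]

/-- `h` is continuous on `X` and affine on `X`. -/
def IsContAffineOn (X : Set E) (h : E → ℝ) : Prop :=
  ContinuousOn h X ∧ ∀ x ∈ X, ∀ y ∈ X, ∀ t ∈ Ioo (0:ℝ) 1,
    h (t • x + (1 - t) • y) = t * h x + (1 - t) * h y

/-- The upper envelope of `f` on `X`. -/
noncomputable def upperEnv (X : Set E) (f : E → ℝ) (x : E) : ℝ :=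
  sInf {r : ℝ | ∃ h : E → ℝ, IsContAffineOn X h ∧ (∀ y ∈ X, f y ≤ h y) ∧ r = h x}

theorem eq_upperEnv_mem_extremePoints (X : Set E) (hXc : IsCompact X)
    (hXconv : Convex ℝ X) [TopologicalSpace.MetrizableSpace X]
    (f : E → ℝ) (hfc : ContinuousOn f X) (hfsc : StrictConvexOn ℝ X f) :
    ∀ x ∈ X, f x = upperEnv X f x → x ∈ Set.extremePoints ℝ X := by
  intro x hx hfx
  refine ⟨hx, fun y hy z hz hseg => ?_⟩
  by_cases hyz : y = z
  · subst hyz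
    rw [openSegment_same] at hseg
    exact hseg.symm
  · exfalso
    obtain ⟨a, b, ha, hb, hab, hxe⟩ := hseg
    have ha1 : a < 1 := by linarith
    have hblt : b = 1 - a := by linarith
    -- strict convexity
    have hstrict : f x < a * f y + b * f z := by
      have := hfsc.2 hy hz hyz ha hb hab
      rw [hxe] at this
      simpa [smul_eq_mul] using this
    -- nonempty: constant majorant
    obtain ⟨M, hMX, hM⟩ := hXc.exists_isMaxOn ⟨x, hx⟩ hfc
    have hne : {r : ℝ | ∃ h : E → ℝ, IsContAffineOn X h ∧ (∀ y ∈ X, f y ≤ h y) ∧ r = h x}.Nonempty := by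
      refine ⟨f M, fun _ => f M, ⟨continuousOn_const, ?_⟩, fun w hw => hM hw, rfl⟩
      intro p _ q _ t _
      ring
    -- lower bound
    have hlb : a * f y + b * f z ≤ upperEnv X f x := by
      apply le_csInf hne
      rintro r ⟨h, ⟨hhc, hha⟩, hmaj, rfl⟩
      have key : h x = a * h y + b * h z := by
        rw [← hxe, hblt]
        exact hha y hy z hz a ⟨ha, ha1⟩
      rw [key]
      have hy' := hmaj y hy
      have hz' := hmaj z hz
      nlinarith
    rw [← hfx] at hlb
    linarith
end

section
/- Let f : ℝ⁺ → ℝ⁺ be a differentiable operator monotone function with f(1) = 1. Then 0 ≤ f'(1) ≤ 1. -/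
open Set

/-- `g` is operator monotone on the positive half-line: for positive invertible
self-adjoint operators on any complex Hilbert space, `A ≤ B` implies
`g(A) ≤ g(B)` (via the continuous functional calculus). -/
def OperatorMonotonePos (g : ℝ → ℝ) : Prop :=
  ∀ (H : Type) [NormedAddCommGroup H] [InnerProductSpace ℂ H] [CompleteSpace H],
    ∀ A B : H →L[ℂ] H, IsSelfAdjoint A → IsSelfAdjoint B →
      spectrum ℝ A ⊆ Set.Ioi 0 → spectrum ℝ B ⊆ Set.Ioi 0 →
      A ≤ B → cfc g A ≤ cfc g B

open ContinuousLinearMap RCLike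
noncomputable section
set_option linter.unusedSectionVars false
variable {H : Type} [NormedAddCommGroup H] [InnerProductSpace ℂ H] [CompleteSpace H]
local notation "⟪" x ", " y "⟫" => @inner ℂ _ _ x y

def pj (u : H) : H →L[ℂ] H := (innerSL ℂ u).smulRight u
lemma pj_apply (u x : H) : pj u x = ⟪u, x⟫ • u := rfl
lemma pj_sa (u : H) : IsSelfAdjoint (pj u) := by
  rw [ContinuousLinearMap.isSelfAdjoint_iff_isSymmetric]
  intro x y
  simp only [ContinuousLinearMap.coe_coe, pj_apply, inner_smul_left, inner_smul_right,
    inner_conj_symm]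
  ring
lemma pj_idem (u : H) (hu : ⟪u, u⟫ = 1) : pj u * pj u = pj u := by
  ext x
  simp [ContinuousLinearMap.mul_apply, pj_apply, inner_smul_right, hu, smul_smul,
    ← inner_self_eq_norm_sq_to_K]
def tp (u : H) (s t : ℝ) : H →L[ℂ] H := (s:ℂ) • pj u + (t:ℂ) • (1 - pj u)
lemma tp_sa (u : H) (s t : ℝ) : IsSelfAdjoint (tp u s t) := by
  have h := pj_sa u
  rw [IsSelfAdjoint] at h ⊢
  simp [tp, star_smul, star_sub, h, Complex.conj_ofReal]
lemma pj_mul_one_sub (u : H) (hu : ⟪u, u⟫ = 1) : pj u * (1 - pj u) = 0 := by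
  simp [mul_sub, pj_idem u hu]
lemma one_sub_mul_pj (u : H) (hu : ⟪u, u⟫ = 1) : (1 - pj u) * pj u = 0 := by
  simp [sub_mul, pj_idem u hu]
lemma one_sub_pj_idem (u : H) (hu : ⟪u, u⟫ = 1) : (1 - pj u) * (1 - pj u) = (1 - pj u) := by
  simp [mul_sub, sub_mul, pj_idem u hu]
lemma tp_mul (u : H) (hu : ⟪u, u⟫ = 1) (c d c' d' : ℂ) :
    (c • pj u + d • (1 - pj u)) * (c' • pj u + d' • (1 - pj u))
      = (c * c') • pj u + (d * d') • (1 - pj u) := by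
  simp [add_mul, mul_add, smul_mul_assoc, mul_smul_comm, smul_smul,
    pj_idem u hu, pj_mul_one_sub u hu, one_sub_mul_pj u hu, one_sub_pj_idem u hu, mul_comm]

lemma smul_one_eq_tp (r : ℝ) (u : H) :
    algebraMap ℝ (H →L[ℂ] H) r = (r:ℂ) • pj u + (r:ℂ) • (1 - pj u) := by
  rw [Algebra.algebraMap_eq_smul_one, ← algebraMap_smul ℂ r (1 : H →L[ℂ] H),
    Complex.coe_algebraMap, smul_sub]
  abel

lemma tp_spectrum (u : H) (hu : ⟪u, u⟫ = 1) (s t : ℝ) :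
    spectrum ℝ (tp u s t) ⊆ {s, t} := by
  intro r hr
  by_contra hrst
  simp only [mem_insert_iff, mem_singleton_iff, not_or] at hrst
  rw [spectrum.mem_iff] at hr
  apply hr
  have key : algebraMap ℝ (H →L[ℂ] H) r - tp u s t
      = ((r - s : ℝ) : ℂ) • pj u + ((r - t : ℝ) : ℂ) • (1 - pj u) := by
    rw [smul_one_eq_tp r u, tp]
    push_cast
    rw [sub_smul, sub_smul]
    abel
  have h1 : (((r - s : ℝ) : ℂ)) * (((r - s : ℝ) : ℂ))⁻¹ = 1 := by
    rw [mul_inv_cancel₀]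
    exact_mod_cast sub_ne_zero.mpr hrst.1
  have h2 : (((r - t : ℝ) : ℂ)) * (((r - t : ℝ) : ℂ))⁻¹ = 1 := by
    rw [mul_inv_cancel₀]
    exact_mod_cast sub_ne_zero.mpr hrst.2
  have h3 : (((r - s : ℝ) : ℂ))⁻¹ * (((r - s : ℝ) : ℂ)) = 1 := by rw [mul_comm]; exact h1
  have h4 : (((r - t : ℝ) : ℂ))⁻¹ * (((r - t : ℝ) : ℂ)) = 1 := by rw [mul_comm]; exact h2
  refine ⟨⟨algebraMap ℝ (H →L[ℂ] H) r - tp u s t,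
    (((r - s : ℝ) : ℂ))⁻¹ • pj u + (((r - t : ℝ) : ℂ))⁻¹ • (1 - pj u), ?_, ?_⟩, rfl⟩
  · rw [key, tp_mul u hu, h1, h2, one_smul, one_smul, add_sub_cancel]
  · rw [key, tp_mul u hu, h3, h4, one_smul, one_smul, add_sub_cancel]

lemma cfc_affine (α β : ℝ) (A : H →L[ℂ] H) (hA : IsSelfAdjoint A) :
    cfc (fun x : ℝ => α + β * x) A = algebraMap ℝ (H →L[ℂ] H) α + β • A := by
  calc cfc (fun x : ℝ => α + β * x) A
      = cfc (fun _ : ℝ => α) A + cfc (fun x : ℝ => β * x) A := cfc_add A _ _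
    _ = algebraMap ℝ (H →L[ℂ] H) α + β • A := by
        rw [cfc_const α A hA, cfc_const_mul β (fun x : ℝ => x) A, cfc_id' ℝ A hA]

lemma tp_cfc (u : H) (hu : ⟪u, u⟫ = 1) (s t : ℝ) (g : ℝ → ℝ) :
    cfc g (tp u s t) = ((g s : ℝ) : ℂ) • pj u + ((g t : ℝ) : ℂ) • (1 - pj u) := by
  by_cases hst : s = t
  · subst hst
    have h1 : tp u s s = algebraMap ℝ (H →L[ℂ] H) s := by
      rw [smul_one_eq_tp s u, tp]
    rw [h1, cfc_algebraMap, smul_one_eq_tp (g s) u]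
  · set β := (g t - g s) / (t - s) with hβ
    set α := g s - β * s with hα
    have hts : t - s ≠ 0 := sub_ne_zero.mpr (Ne.symm hst)
    have hgs : α + β * s = g s := by rw [hα]; ring
    have hgt : α + β * t = g t := by
      rw [hα, hβ]; field_simp; ring
    have hEq : EqOn g (fun x : ℝ => α + β * x) (spectrum ℝ (tp u s t)) := by
      intro x hx
      rcases tp_spectrum u hu s t hx with h | h
      · rw [h]; exact hgs.symm
      · rw [mem_singleton_iff.mp h]; exact hgt.symm
    rw [cfc_congr hEq, cfc_affine α β _ (tp_sa u s t), smul_one_eq_tp α u, tp,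
      ← algebraMap_smul ℂ β, Complex.coe_algebraMap, smul_add, smul_smul, smul_smul]
    rw [← hgs, ← hgt]
    push_cast
    rw [add_smul, add_smul]
    abel_nf

lemma inner_pj_self (u x : H) : ⟪pj u x, x⟫ = (Complex.normSq ⟪u, x⟫ : ℂ) := by
  rw [pj_apply, inner_smul_left, ← Complex.normSq_eq_conj_mul_self]

lemma tp_like_inner_re (u x : H) (c d : ℝ) :
    Complex.re ⟪((c:ℂ) • pj u + (d:ℂ) • (1 - pj u)) x, x⟫
      = c * Complex.normSq ⟪u, x⟫
        + d * (Complex.re ⟪x, x⟫ - Complex.normSq ⟪u, x⟫) := by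
  simp only [ContinuousLinearMap.add_apply, ContinuousLinearMap.smul_apply,
    ContinuousLinearMap.sub_apply, ContinuousLinearMap.one_apply,
    inner_add_left, inner_smul_left, inner_sub_left, inner_pj_self, Complex.conj_ofReal]
  simp [Complex.mul_re]

-- concrete vectors
abbrev E2 : Type := EuclideanSpace ℂ (Fin 2)
def e0 : E2 := EuclideanSpace.single 0 1
def uv (a b : ℝ) : E2 := (WithLp.equiv 2 (Fin 2 → ℂ)).symm ![(a:ℂ), (b:ℂ)]

example (a b : ℝ) (h : a^2 + b^2 = 1) : ⟪uv a b, uv a b⟫ = 1 := by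
  simp [uv, PiLp.inner_apply, RCLike.inner_apply, Fin.sum_univ_two, Complex.conj_ofReal,
    ← inner_self_eq_norm_sq_to_K]
  have h2 := congrArg (fun r : ℝ => (r : ℂ)) h
  push_cast at h2
  linear_combination h2

example : ⟪(e0 : E2), e0⟫ = 1 := by
  simp [e0, PiLp.inner_apply, RCLike.inner_apply, Fin.sum_univ_two,
    EuclideanSpace.single_apply]

example (a b : ℝ) (x : E2) : ⟪uv a b, x⟫ = (a:ℂ) * x 0 + (b:ℂ) * x 1 := by
  simp [uv, PiLp.inner_apply, RCLike.inner_apply, Fin.sum_univ_two, Complex.conj_ofReal]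
  ring

example (x : E2) : ⟪(e0:E2), x⟫ = x 0 := by
  simp [e0, PiLp.inner_apply, RCLike.inner_apply, Fin.sum_univ_two,
    EuclideanSpace.single_apply]

example (x : E2) : Complex.re ⟪x, x⟫ = Complex.normSq (x 0) + Complex.normSq (x 1) := by
  simp [PiLp.inner_apply, RCLike.inner_apply, Fin.sum_univ_two, ← Complex.normSq_eq_conj_mul_self,
    ← inner_self_eq_norm_sq_to_K, Complex.mul_conj]

lemma uv_inner_self (a b : ℝ) (h : a^2 + b^2 = 1) : ⟪uv a b, uv a b⟫ = 1 := by
  simp [uv, PiLp.inner_apply, RCLike.inner_apply, Fin.sum_univ_two, Complex.conj_ofReal,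
    ← inner_self_eq_norm_sq_to_K]
  have h2 := congrArg (fun r : ℝ => (r : ℂ)) h
  push_cast at h2
  linear_combination h2

lemma e0_inner_self : ⟪(e0 : E2), e0⟫ = 1 := by
  simp [e0, PiLp.inner_apply, RCLike.inner_apply, Fin.sum_univ_two,
    EuclideanSpace.single_apply]

lemma uv_inner (a b : ℝ) (x : E2) : ⟪uv a b, x⟫ = (a:ℂ) * x 0 + (b:ℂ) * x 1 := by
  simp [uv, PiLp.inner_apply, RCLike.inner_apply, Fin.sum_univ_two, Complex.conj_ofReal]
  ring

lemma e0_inner (x : E2) : ⟪(e0:E2), x⟫ = x 0 := by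
  simp [e0, PiLp.inner_apply, RCLike.inner_apply, Fin.sum_univ_two,
    EuclideanSpace.single_apply]

lemma inner_self_re (x : E2) :
    Complex.re ⟪x, x⟫ = Complex.normSq (x 0) + Complex.normSq (x 1) := by
  simp [PiLp.inner_apply, RCLike.inner_apply, Fin.sum_univ_two,
    ← Complex.normSq_eq_conj_mul_self, ← inner_self_eq_norm_sq_to_K, Complex.mul_conj]

set_option maxHeartbeats 2000000 in
lemma master (f : ℝ → ℝ) (hf : OperatorMonotonePos f)
    (s t : ℝ) (hs : 0 < s) (ht : 0 < t) (a b : ℝ) (hab : a^2 + b^2 = 1)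
    (δ : ℝ) (hδ : 0 < δ) :
    f s * a^2 + f t * b^2 ≤ f (s*a^2 + t*b^2 + δ) := by
  set u : E2 := uv a b with hu_def
  have hu : ⟪u, u⟫ = 1 := uv_inner_self a b hab
  have he : ⟪(e0:E2), e0⟫ = 1 := e0_inner_self
  set d1 : ℝ := s*a^2 + t*b^2 + δ with hd1
  set M : ℝ := s*b^2 + t*a^2 + (s-t)^2*a^2*b^2/δ with hM
  set A : E2 →L[ℂ] E2 := tp u s t with hA
  set B : E2 →L[ℂ] E2 := tp e0 d1 M with hB
  have ha2 : (0:ℝ) ≤ a^2 := sq_nonneg a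
  have hb2 : (0:ℝ) ≤ b^2 := sq_nonneg b
  have hd1pos : 0 < d1 := by nlinarith
  have hMpos : 0 < M := by
    have h6 : 0 ≤ (s-t)^2*a^2*b^2/δ := by positivity
    have h5 : 0 < s*b^2 + t*a^2 := by
      rcases le_total s t with h | h
      · nlinarith
      · nlinarith
    rw [hM]; linarith
  -- A ≤ B
  have hle : A ≤ B := by
    rw [ContinuousLinearMap.le_def]
    refine ⟨(((tp_sa e0 d1 M)).sub (tp_sa u s t)).isSymmetric, fun x => ?_⟩
    show 0 ≤ Complex.re ⟪(B - A) x, x⟫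
    rw [ContinuousLinearMap.sub_apply, inner_sub_left, Complex.sub_re]
    rw [hA, hB, tp, tp, tp_like_inner_re, tp_like_inner_re]
    rw [uv_inner, e0_inner, inner_self_re]
    set z := x 0
    set w := x 1
    have hnq : Complex.normSq ((a:ℂ) * z + (b:ℂ) * w)
        = a^2 * Complex.normSq z + b^2 * Complex.normSq w
          + 2*a*b*((z * (starRingEnd ℂ) w).re) := by
      rw [Complex.normSq_add, Complex.normSq_mul, Complex.normSq_mul]
      simp only [Complex.normSq_ofReal, Complex.conj_ofReal, Complex.mul_re,
        Complex.mul_im, Complex.ofReal_re, Complex.ofReal_im, Complex.conj_re,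
        Complex.conj_im, Complex.normSq_apply]
      ring
    rw [hnq]
    set X := Complex.normSq z
    set Y := Complex.normSq w
    set R := (z * (starRingEnd ℂ) w).re
    have hX : 0 ≤ X := Complex.normSq_nonneg z
    have hY : 0 ≤ Y := Complex.normSq_nonneg w
    have hR2 : R^2 ≤ X * Y := by
      have h1 : R^2 ≤ Complex.normSq (z * (starRingEnd ℂ) w) := by
        rw [Complex.normSq_apply]; nlinarith [sq_nonneg (z * (starRingEnd ℂ) w).im]
      rwa [Complex.normSq_mul, Complex.normSq_conj] at h1
    have key : 0 ≤ δ * X - 2*(s-t)*a*b*R + ((s-t)^2*a^2*b^2/δ) * Y := by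
      have h0 : 0 ≤ δ^2*X - 2*δ*((s-t)*a*b)*R + ((s-t)*a*b)^2*Y := by
        set c : ℝ := (s-t)*a*b with hc
        have h1 : 0 ≤ (δ^2*X + c^2*Y - 2*δ*c*R) * (δ^2*X + c^2*Y + 2*δ*c*R) := by
          nlinarith [sq_nonneg (δ^2*X - c^2*Y),
            mul_nonneg (sq_nonneg (δ*c)) (sub_nonneg.2 hR2)]
        have h2 : 0 ≤ δ^2*X + c^2*Y :=
          add_nonneg (mul_nonneg (sq_nonneg δ) hX) (mul_nonneg (sq_nonneg c) hY)
        rcases le_or_gt (2*δ*c*R) 0 with h3 | h3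
        · linarith
        · have h4 : 0 < δ^2*X + c^2*Y + 2*δ*c*R := by linarith
          nlinarith [h1, h4]
      have h7 : δ * X - 2*(s-t)*a*b*R + ((s-t)^2*a^2*b^2/δ) * Y
          = (δ^2*X - 2*δ*((s-t)*a*b)*R + ((s-t)*a*b)^2*Y)/δ := by
        field_simp
      rw [h7]
      exact div_nonneg h0 hδ.le
    have hexp : d1 * X + M * (X + Y - X) -
        (s * (a ^ 2 * X + b ^ 2 * Y + 2 * a * b * R)
          + t * (X + Y - (a ^ 2 * X + b ^ 2 * Y + 2 * a * b * R)))
        = δ * X - 2*(s-t)*a*b*R + ((s-t)^2*a^2*b^2/δ) * Y := by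
      rw [hd1, hM]
      linear_combination (t*(X+Y)) * hab
    exact le_of_le_of_eq key hexp.symm
  have hspecA : spectrum ℝ A ⊆ Ioi 0 := by
    intro r hr
    rcases tp_spectrum u hu s t hr with h | h
    · rw [h]; exact hs
    · rw [mem_singleton_iff.mp h]; exact ht
  have hspecB : spectrum ℝ B ⊆ Ioi 0 := by
    intro r hr
    rcases tp_spectrum e0 he d1 M hr with h | h
    · rw [h]; exact hd1pos
    · rw [mem_singleton_iff.mp h]; exact hMpos
  have hcfc := hf E2 A B (tp_sa u s t) (tp_sa e0 d1 M) hspecA hspecB hle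
  rw [ContinuousLinearMap.le_def] at hcfc
  have h9 : (0:ℝ) ≤ Complex.re ⟪(cfc f B - cfc f A) e0, e0⟫ := hcfc.2 e0
  rw [ContinuousLinearMap.sub_apply, inner_sub_left, Complex.sub_re] at h9
  have hcA : cfc f A = ((f s : ℝ):ℂ) • pj u + ((f t : ℝ):ℂ) • (1 - pj u) := by
    rw [hA]; exact tp_cfc u hu s t f
  have hcB : cfc f B = ((f d1 : ℝ):ℂ) • pj (e0:E2) + ((f M : ℝ):ℂ) • (1 - pj e0) := by
    rw [hB]; exact tp_cfc e0 he d1 M f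
  rw [hcA, hcB, tp_like_inner_re, tp_like_inner_re] at h9
  have hue : ⟪u, (e0:E2)⟫ = (a:ℂ) := by
    rw [hu_def, uv_inner]
    simp [e0, EuclideanSpace.single_apply]
  have hee : ⟪(e0:E2), e0⟫ = (1:ℂ) := he
  rw [hue, hee] at h9
  simp only [Complex.normSq_ofReal, Complex.normSq_one, Complex.one_re] at h9
  have hb2' : b^2 = 1 - a^2 := by linarith
  calc f s * a^2 + f t * b^2 = f s * (a*a) + f t * (1 - a*a) := by
        rw [hb2']; ring_nf
    _ ≤ f d1 := by nlinarith [h9]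
    _ = f (s*a^2 + t*b^2 + δ) := by rw [hd1]

section Final
open Filter Topology

variable (f : ℝ → ℝ)

lemma mono_of (hf : OperatorMonotonePos f) :
    ∀ p q : ℝ, 0 < p → p ≤ q → f p ≤ f q := by
  intro p q hp hpq
  rcases eq_or_lt_of_le hpq with rfl | h
  · exact le_refl _
  · have hm := master f hf p p hp hp 1 0 (by norm_num) (q - p) (by linarith)
    have h1 : f p * (1:ℝ)^2 + f p * (0:ℝ)^2 = f p := by ring
    have h2 : p * (1:ℝ)^2 + p * (0:ℝ)^2 + (q - p) = q := by ring
    rwa [h1, h2] at hm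

lemma conc_of (hf : OperatorMonotonePos f) (hdiff : ∀ x ∈ Ioi (0:ℝ), DifferentiableAt ℝ f x)
    (p q c : ℝ) (hp : 0 < p) (hq : 0 < q) (hc0 : 0 ≤ c) (hc1 : c ≤ 1) :
    c * f p + (1-c) * f q ≤ f (c*p + (1-c)*q) := by
  set a := Real.sqrt c with ha_def
  set b := Real.sqrt (1-c) with hb_def
  have ha : a^2 = c := Real.sq_sqrt hc0
  have hb : b^2 = 1 - c := Real.sq_sqrt (by linarith)
  have hd : 0 < c*p + (1-c)*q := by
    rcases le_total p q with h | h
    · nlinarith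
    · nlinarith
  have hcont : ContinuousAt f (c*p + (1-c)*q) := (hdiff _ hd).continuousAt
  have hev : ∀ δ ∈ Ioi (0:ℝ), c * f p + (1-c) * f q ≤ f (c*p + (1-c)*q + δ) := by
    intro δ hδ
    have hm := master f hf p q hp hq a b (by rw [ha, hb]; ring) δ hδ
    rw [ha, hb] at hm
    have harg : p*c + q*(1-c) + δ = c*p + (1-c)*q + δ := by ring
    rw [harg] at hm
    linarith
  have h1 : Tendsto (fun δ : ℝ => c*p + (1-c)*q + δ) (𝓝[>] 0) (𝓝 (c*p+(1-c)*q)) := by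
    have h2 : Tendsto (fun δ : ℝ => c*p + (1-c)*q + δ) (𝓝 0) (𝓝 (c*p+(1-c)*q)) := by
      have := ((continuous_id.tendsto (0:ℝ)).const_add (c*p + (1-c)*q))
      simpa using this
    exact h2.mono_left nhdsWithin_le_nhds
  exact ge_of_tendsto (hcont.tendsto.comp h1)
    (eventually_nhdsWithin_of_forall (fun δ hδ => hev δ hδ))

theorem deriv_one_mem_Icc' (hpos : ∀ x ∈ Ioi (0:ℝ), 0 < f x)
    (hdiff : ∀ x ∈ Ioi (0:ℝ), DifferentiableAt ℝ f x)
    (hf : OperatorMonotonePos f) (hone : f 1 = 1) :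
    deriv f 1 ∈ Icc (0:ℝ) 1 := by
  have hd1 : HasDerivAt f (deriv f 1) 1 := (hdiff 1 (by norm_num)).hasDerivAt
  have hslope : Tendsto (slope f 1) (𝓝[>] (1:ℝ)) (𝓝 (deriv f 1)) :=
    (hasDerivAt_iff_tendsto_slope.mp hd1).mono_left
      (nhdsWithin_mono 1 (fun y hy => ne_of_gt hy))
  have hconc3 : ∀ x y : ℝ, 0 < x → x < 1 → 1 < y →
      (y-1)*f x + (1-x)*f y ≤ (y-x) * f 1 := by
    intro x y hx hx1 hy
    have hyx : (0:ℝ) < y - x := by linarith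
    set c := (y-1)/(y-x) with hc_def
    have hc0 : 0 ≤ c := by rw [hc_def]; apply div_nonneg <;> linarith
    have hc1 : c ≤ 1 := by rw [hc_def, div_le_one hyx]; linarith
    have h := conc_of f hf hdiff x y c hx (by linarith) hc0 hc1
    have harg : c*x + (1-c)*y = 1 := by rw [hc_def]; field_simp; try ring
    rw [harg] at h
    have heq : (y-1)*f x + (1-x)*f y = (y-x) * (c * f x + (1-c) * f y) := by
      rw [hc_def]; field_simp; try ring
    rw [heq]
    exact mul_le_mul_of_nonneg_left h hyx.le
  constructor
  · -- lower bound
    refine ge_of_tendsto hslope (eventually_nhdsWithin_of_forall (fun y hy => ?_))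
    rw [slope_def_field]
    have h1 : f 1 ≤ f y := mono_of f hf 1 y (by norm_num) (le_of_lt hy)
    have h2 : (0:ℝ) < y - 1 := by linarith [mem_Ioi.mp hy]
    exact div_nonneg (by linarith) h2.le
  · -- upper bound
    by_contra hD
    push_neg at hD
    set D := deriv f 1 with hD_def
    set x := (D-1)/(2*D) with hx_def
    have hDpos : 0 < D := by linarith
    have hx0 : 0 < x := by
      rw [hx_def]; apply div_pos <;> linarith
    have hx1 : x < 1 := by
      rw [hx_def, div_lt_one (by linarith)]; linarith
    have hbound : ∀ y ∈ Ioi (1:ℝ), slope f 1 y ≤ 1/(1-x) := by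
      intro y hy
      have hy1 : (1:ℝ) < y := hy
      have h3 := hconc3 x y hx0 hx1 hy1
      rw [hone] at h3
      have hfx : 0 < f x := hpos x hx0
      rw [slope_def_field, div_le_div_iff₀ (by linarith) (by linarith : (0:ℝ) < 1 - x)]
      rw [hone]
      nlinarith [h3, mul_pos (by linarith : (0:ℝ) < y - 1) hfx]
    have hle := le_of_tendsto hslope (eventually_nhdsWithin_of_forall hbound)
    have h1x : 1 - x = (D+1)/(2*D) := by
      rw [hx_def]; field_simp; ring
    have : 1/(1-x) < D := by
      rw [h1x, one_div_div, div_lt_iff₀ (by linarith : (0:ℝ) < D + 1)]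
      nlinarith
    linarith
end Final

end

/-- A differentiable operator monotone function `f : ℝ⁺ → ℝ⁺` with `f 1 = 1`
satisfies `0 ≤ f'(1) ≤ 1`. -/
theorem deriv_one_mem_Icc (f : ℝ → ℝ) (hpos : ∀ x ∈ Ioi (0:ℝ), 0 < f x)
    (hdiff : ∀ x ∈ Ioi (0:ℝ), DifferentiableAt ℝ f x)
    (hf : OperatorMonotonePos f) (hone : f 1 = 1) :
    deriv f 1 ∈ Icc (0:ℝ) 1 := by
  exact deriv_one_mem_Icc' f hpos hdiff hf hone
end

section
/- Let f : ℝ⁺ → ℝ⁺ be differentiable and operator monotone. Then |(f(t₁) − f(t₂))/(t₁ − t₂)|² ≤ f'(t₁)·f'(t₂) for all distinct t₁, t₂ > 0. Consequently, if f'(1) = 0 then f is constant. -/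
open Set

open Filter Topology ContinuousLinearMap

noncomputable section

abbrev H2 := EuclideanSpace ℂ (Fin 2)
abbrev φ : Matrix (Fin 2) (Fin 2) ℂ ≃⋆ₐ[ℂ] (H2 →L[ℂ] H2) := Matrix.toEuclideanCLM (𝕜 := ℂ)
abbrev ψ : Matrix (Fin 2) (Fin 2) ℂ ≃ₐ[ℝ] (H2 →L[ℂ] H2) :=
  (StarAlgEquiv.toAlgEquiv (φ : Matrix (Fin 2) (Fin 2) ℂ ≃⋆ₐ[ℂ] (H2 →L[ℂ] H2)) :
      Matrix (Fin 2) (Fin 2) ℂ ≃ₐ[ℂ] (H2 →L[ℂ] H2)).restrictScalars ℝ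

lemma sa (a b c : ℝ) : IsSelfAdjoint (φ !![(a:ℂ), b; b, c]) := by
  rw [_root_.IsSelfAdjoint, ← map_star]
  congr 1
  ext i j
  fin_cases i <;> fin_cases j <;> simp [Matrix.star_apply]

lemma apply_eq (M : Matrix (Fin 2) (Fin 2) ℂ) (x : H2) (i : Fin 2) :
    φ M x i = M i 0 * x 0 + M i 1 * x 1 := by
  have h := Matrix.ofLp_toEuclideanCLM (𝕜 := ℂ) M x
  have : (φ M x) i = (Matrix.toLin' M (WithLp.equiv _ _ x)) i := by
    rw [Matrix.toLin'_apply]; exact congrFun h i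
  rw [this, Matrix.toLin'_apply]
  simp [Matrix.mulVec, dotProduct, Fin.sum_univ_two]

lemma spec_subset (a b c α β : ℝ) (h1 : a + c = α + β) (h2 : a * c - b * b = α * β) :
    spectrum ℝ (φ !![(a:ℂ), b; b, c]) ⊆ {α, β} := by
  have hφψ : φ !![(a:ℂ), b; b, c] = ψ !![(a:ℂ), b; b, c] := rfl
  rw [hφψ, AlgEquiv.spectrum_eq]
  intro r hr
  rw [spectrum.mem_iff] at hr
  by_contra hmem
  simp only [Set.mem_insert_iff, Set.mem_singleton_iff, not_or] at hmem
  apply hr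
  rw [Matrix.isUnit_iff_isUnit_det, isUnit_iff_ne_zero]
  have hdet : (algebraMap ℝ (Matrix (Fin 2) (Fin 2) ℂ) r - !![(a:ℂ), b; b, c]).det
      = ((r : ℂ) - α) * ((r : ℂ) - β) := by
    have halg : algebraMap ℝ (Matrix (Fin 2) (Fin 2) ℂ) r = !![(r:ℂ), 0; 0, r] := by
      ext i j
      fin_cases i <;> fin_cases j <;> simp [Matrix.algebraMap_matrix_apply]
    rw [halg]
    have : (!![(r:ℂ), 0; 0, r] - !![(a:ℂ), b; b, c]) = !![(r:ℂ) - a, -b; -b, (r:ℂ) - c] := by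
      ext i j
      fin_cases i <;> fin_cases j <;> simp
    rw [this, Matrix.det_fin_two_of]
    have h1' : (a:ℂ) + c = (α:ℂ) + β := by exact_mod_cast h1
    have h2' : (a:ℂ) * c - b * b = (α:ℂ) * β := by exact_mod_cast h2
    linear_combination (-(r:ℂ) + a + c - α - β) * h1' + h2' + ((α:ℂ)+β-a-c) * h1'
  rw [hdet]
  exact mul_ne_zero (sub_ne_zero.mpr (by exact_mod_cast hmem.1))
    (sub_ne_zero.mpr (by exact_mod_cast hmem.2))

lemma ones_pos (e : ℝ) (he : 0 ≤ e) : (φ !![(e:ℂ), e; e, e]).IsPositive := by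
  refine ⟨(sa e e e).isSymmetric, fun x => ?_⟩
  have : ContinuousLinearMap.reApplyInnerSelf (φ !![(e:ℂ), e; e, e]) x
      = Complex.re (inner (𝕜 := ℂ) (φ !![(e:ℂ), e; e, e] x) x) := rfl
  rw [this, PiLp.inner_apply]
  simp only [Fin.sum_univ_two, RCLike.inner_apply, apply_eq]
  have : (starRingEnd ℂ) (!![(e:ℂ), e; e, e] 0 0 * x 0 + !![(e:ℂ), e; e, e] 0 1 * x 1) * x 0
      + (starRingEnd ℂ) (!![(e:ℂ), e; e, e] 1 0 * x 0 + !![(e:ℂ), e; e, e] 1 1 * x 1) * x 1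
      = ((e * Complex.normSq (x 0 + x 1) : ℝ) : ℂ) := by
    simp only [show !![(e:ℂ), e; e, e] 0 0 = e from rfl, show !![(e:ℂ), e; e, e] 0 1 = e from rfl,
      show !![(e:ℂ), e; e, e] 1 0 = e from rfl, show !![(e:ℂ), e; e, e] 1 1 = e from rfl]
    rw [show (e * Complex.normSq (x 0 + x 1) : ℝ) = (e : ℝ) * Complex.normSq (x 0 + x 1) from rfl]
    push_cast
    rw [← Complex.mul_conj (x 0 + x 1)]
    rw [map_add, map_mul, map_add, map_mul]
    simp [Complex.conj_ofReal]
    ring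
  rw [mul_comm (x 0) ((starRingEnd ℂ) _), mul_comm (x 1) ((starRingEnd ℂ) _), this, Complex.ofReal_re]
  exact mul_nonneg he (Complex.normSq_nonneg _)

lemma quad_of_pos (p q r : ℝ) (hpos : (φ !![(p:ℂ), q; q, r]).IsPositive) : q^2 ≤ p * r := by
  have key : ∀ x₀ : ℝ, 0 ≤ p * (x₀ * x₀) + (2*q) * x₀ + r := by
    intro x₀
    have h := hpos.2 ((WithLp.equiv 2 (Fin 2 → ℂ)).symm ![(x₀:ℂ), 1])
    have hre : ContinuousLinearMap.reApplyInnerSelf (φ !![(p:ℂ), q; q, r])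
        ((WithLp.equiv 2 (Fin 2 → ℂ)).symm ![(x₀:ℂ), 1])
        = Complex.re (inner (𝕜 := ℂ) (φ !![(p:ℂ), q; q, r]
          ((WithLp.equiv 2 (Fin 2 → ℂ)).symm ![(x₀:ℂ), 1]))
          ((WithLp.equiv 2 (Fin 2 → ℂ)).symm ![(x₀:ℂ), 1])) := rfl
    rw [hre] at h
    set x : H2 := (WithLp.equiv 2 (Fin 2 → ℂ)).symm ![(x₀:ℂ), 1] with hx
    have hx0 : x 0 = (x₀:ℂ) := rfl
    have hx1 : x 1 = 1 := rfl
    have hinner : (inner (𝕜 := ℂ) (φ !![(p:ℂ), q; q, r] x) x)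
        = ((p * (x₀*x₀) + (2*q)*x₀ + r : ℝ) : ℂ) := by
      rw [PiLp.inner_apply]
      simp only [Fin.sum_univ_two, RCLike.inner_apply]
      rw [apply_eq, apply_eq, hx0, hx1]
      simp
      push_cast
      ring_nf
    rw [hinner] at h
    simpa using h
  have := discrim_le_zero key
  rw [discrim] at this
  nlinarith [this]

lemma cfc_affine_s18 (T : H2 →L[ℂ] H2) (hT : IsSelfAdjoint T) (u v : ℝ) :
    cfc (fun x : ℝ => u * x + v) T = u • T + v • (1 : H2 →L[ℂ] H2) := by
  rw [show (fun x : ℝ => u * x + v) = (fun x : ℝ => (u * ·) x + v) from rfl]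
  rw [cfc_add_const v (u * ·) T, cfc_const_mul_id u T hT, Algebra.algebraMap_eq_smul_one]

lemma smul_phi (u : ℝ) (M : Matrix (Fin 2) (Fin 2) ℂ) : φ (u • M) = u • φ M := by
  have h1 : φ (u • M) = ψ (u • M) := rfl
  have h2 : φ M = ψ M := rfl
  rw [h1, h2, Algebra.smul_def, map_mul, AlgEquiv.commutes, ← Algebra.smul_def]

set_option maxHeartbeats 2000000 in
lemma core (f : ℝ → ℝ) (hf : OperatorMonotonePos f) (t₁ t₂ ε α β u v u' v' : ℝ)
    (ht₁ : 0 < t₁) (ht₂ : 0 < t₂) (hε : 0 < ε) (hα : 0 < α) (hβ : 0 < β)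
    (hsum : α + β = t₁ + t₂ + ε) (hprod : α * β = t₁*t₂ + ε*(t₁+t₂)/2)
    (hfα : f α = u*α + v) (hfβ : f β = u*β + v)
    (hft₁ : f t₁ = u'*t₁ + v') (hft₂ : f t₂ = u'*t₂ + v') :
    (u*(ε/2))^2 ≤ (u*(t₁+ε/2)+v - f t₁) * (u*(t₂+ε/2)+v - f t₂) := by
  set MA : Matrix (Fin 2) (Fin 2) ℂ := !![((t₁:ℝ):ℂ), ((0:ℝ):ℂ); ((0:ℝ):ℂ), ((t₂:ℝ):ℂ)] with hMA
  set MB : Matrix (Fin 2) (Fin 2) ℂ :=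
    !![((t₁+ε/2 : ℝ):ℂ), ((ε/2 : ℝ):ℂ); ((ε/2 : ℝ):ℂ), ((t₂+ε/2 : ℝ):ℂ)] with hMB
  set A : H2 →L[ℂ] H2 := φ MA with hA
  set B : H2 →L[ℂ] H2 := φ MB with hB
  have saA : IsSelfAdjoint A := sa t₁ 0 t₂
  have saB : IsSelfAdjoint B := sa (t₁+ε/2) (ε/2) (t₂+ε/2)
  have specA : spectrum ℝ A ⊆ {t₁, t₂} := spec_subset t₁ 0 t₂ t₁ t₂ (by ring) (by ring)
  have specB : spectrum ℝ B ⊆ {α, β} :=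
    spec_subset (t₁+ε/2) (ε/2) (t₂+ε/2) α β (by linarith) (by nlinarith)
  have specAι : spectrum ℝ A ⊆ Set.Ioi 0 := by
    refine specA.trans ?_
    intro x hx
    rcases hx with h | h <;> simp_all [Set.mem_Ioi]
  have specBι : spectrum ℝ B ⊆ Set.Ioi 0 := by
    refine specB.trans ?_
    intro x hx
    rcases hx with h | h <;> simp_all [Set.mem_Ioi]
  have hle : A ≤ B := by
    rw [ContinuousLinearMap.le_def]
    have : B - A = φ !![((ε/2 : ℝ):ℂ), ((ε/2 : ℝ):ℂ); ((ε/2 : ℝ):ℂ), ((ε/2 : ℝ):ℂ)] := by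
      rw [hA, hB, ← map_sub]
      congr 1
      ext i j
      fin_cases i <;> fin_cases j <;> simp [hMA, hMB] <;> push_cast <;> ring_nf
    rw [this]
    exact ones_pos (ε/2) (by positivity)
  have hcfc := hf H2 A B saA saB specAι specBι hle
  have cfcA : cfc f A = u' • A + v' • (1 : H2 →L[ℂ] H2) := by
    rw [cfc_congr (g := fun x : ℝ => u' * x + v') (fun x hx => ?_), cfc_affine_s18 A saA]
    rcases specA hx with h | h <;> subst h
    · exact hft₁
    · exact hft₂
  have cfcB : cfc f B = u • B + v • (1 : H2 →L[ℂ] H2) := by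
    rw [cfc_congr (g := fun x : ℝ => u * x + v) (fun x hx => ?_), cfc_affine_s18 B saB]
    rcases specB hx with h | h <;> subst h
    · exact hfα
    · exact hfβ
  rw [cfcA, cfcB] at hcfc
  rw [ContinuousLinearMap.le_def] at hcfc
  have hDmat : (u • B + v • (1 : H2 →L[ℂ] H2)) - (u' • A + v' • (1 : H2 →L[ℂ] H2))
      = φ !![((u*(t₁+ε/2)+v - f t₁ : ℝ):ℂ), ((u*(ε/2) : ℝ):ℂ);
             ((u*(ε/2) : ℝ):ℂ), ((u*(t₂+ε/2)+v - f t₂ : ℝ):ℂ)] := by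
    have hft1c : ((f t₁ : ℝ) : ℂ) = (u':ℂ)*t₁ + v' := by exact_mod_cast hft₁
    have hft2c : ((f t₂ : ℝ) : ℂ) = (u':ℂ)*t₂ + v' := by exact_mod_cast hft₂
    rw [show (1 : H2 →L[ℂ] H2) = φ 1 from (map_one φ).symm, hA, hB,
      ← smul_phi, ← smul_phi, ← smul_phi, ← smul_phi, ← map_add, ← map_add, ← map_sub]
    congr 1
    ext i j
    fin_cases i <;> fin_cases j
    · simp [hMA, hMB, Matrix.one_apply, Complex.real_smul]
      linear_combination hft1c
    · simp [hMA, hMB, Matrix.one_apply, Complex.real_smul]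
    · simp [hMA, hMB, Matrix.one_apply, Complex.real_smul]
    · simp [hMA, hMB, Matrix.one_apply, Complex.real_smul]
      linear_combination hft2c
  rw [hDmat] at hcfc
  have := quad_of_pos _ _ _ hcfc
  exact this


set_option maxHeartbeats 2000000 in

private lemma dd_sq_le_of_lt (f : ℝ → ℝ)
    (hpos : ∀ x ∈ Ioi (0:ℝ), 0 < f x)
    (hdiff : ∀ x ∈ Ioi (0:ℝ), DifferentiableAt ℝ f x)
    (core : ∀ (t₁ t₂ ε α β u v u' v' : ℝ),
      0 < t₁ → 0 < t₂ → 0 < ε → 0 < α → 0 < β →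
      α + β = t₁ + t₂ + ε → α * β = t₁*t₂ + ε*(t₁+t₂)/2 →
      f α = u*α + v → f β = u*β + v → f t₁ = u'*t₁ + v' → f t₂ = u'*t₂ + v' →
      (u*(ε/2))^2 ≤ (u*(t₁+ε/2)+v - f t₁) * (u*(t₂+ε/2)+v - f t₂))
    (t₁ t₂ : ℝ) (ht₁ : 0 < t₁) (ht₂ : 0 < t₂) (hlt : t₂ < t₁) :
    ((f t₁ - f t₂) / (t₁ - t₂)) ^ 2 ≤ deriv f t₁ * deriv f t₂ := by
  have hδ : 0 < t₁ - t₂ := by linarith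
  set δ : ℝ := t₁ - t₂ with hδdef
  set S : ℝ → ℝ := fun ε => Real.sqrt (δ^2 + ε^2) with hSdef
  set α : ℝ → ℝ := fun ε => (t₁ + t₂ + ε + S ε)/2 with hαdef
  set β : ℝ → ℝ := fun ε => (t₁ + t₂ + ε - S ε)/2 with hβdef
  set u : ℝ → ℝ := fun ε => (f (α ε) - f (β ε)) / S ε with hudef
  set v : ℝ → ℝ := fun ε => f (α ε) - u ε * α ε with hvdef
  set u' : ℝ := (f t₁ - f t₂) / δ with hu'def
  set v' : ℝ := f t₁ - u' * t₁ with hv'def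
  set W : ℝ → ℝ := fun ε => ε / (S ε + δ) with hWdef
  -- pointwise facts for ε > 0
  have hS2 : ∀ ε : ℝ, S ε ^ 2 = δ^2 + ε^2 := fun ε =>
    Real.sq_sqrt (by positivity)
  have hSpos : ∀ ε : ℝ, 0 < ε → 0 < S ε := fun ε hε =>
    Real.sqrt_pos.mpr (by positivity)
  have hSgt : ∀ ε : ℝ, 0 < ε → δ < S ε := by
    intro ε hε
    nlinarith [hS2 ε, hSpos ε hε, mul_pos hε hε]
  have hSlt : ∀ ε : ℝ, 0 < ε → S ε < δ + ε := by
    intro ε hε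
    nlinarith [hS2 ε, hSpos ε hε, mul_pos hε hδ]
  have hαgt : ∀ ε : ℝ, 0 < ε → t₁ < α ε := by
    intro ε hε
    have := hSgt ε hε
    simp only [hαdef]
    rw [hδdef] at this
    linarith
  have hβgt : ∀ ε : ℝ, 0 < ε → t₂ < β ε := by
    intro ε hε
    have := hSlt ε hε
    simp only [hβdef]
    rw [hδdef] at this
    linarith
  have hSW : ∀ ε : ℝ, 0 < ε → S ε - δ = ε * W ε := by
    intro ε hε
    have h1 : S ε + δ ≠ 0 := by positivity
    rw [hWdef]
    field_simp
    linear_combination hS2 ε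
  have hαt : ∀ ε : ℝ, 0 < ε → α ε - t₁ = ε * (1 + W ε)/2 := by
    intro ε hε
    have := hSW ε hε
    simp only [hαdef]
    rw [hδdef] at this
    linarith
  have hβt : ∀ ε : ℝ, 0 < ε → β ε - t₂ = ε * (1 - W ε)/2 := by
    intro ε hε
    have := hSW ε hε
    simp only [hβdef]
    rw [hδdef] at this
    linarith
  have hWpos : ∀ ε : ℝ, 0 < ε → 0 < W ε := by
    intro ε hε
    have := hSpos ε hε
    rw [hWdef]
    positivity
  have hWlt : ∀ ε : ℝ, 0 < ε → W ε < 1 := by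
    intro ε hε
    have h1 := hSgt ε hε
    have h2 : 0 < S ε + δ := by have := hSpos ε hε; positivity
    rw [hWdef, div_lt_one h2]
    nlinarith [hS2 ε, hSpos ε hε, hδ]
  -- the key inequality, reformulated
  set P : ℝ → ℝ := fun ε => slope f t₁ (α ε) * ((1 + W ε)/2) - u ε * (W ε / 2) with hPdef
  set R : ℝ → ℝ := fun ε => slope f t₂ (β ε) * ((1 - W ε)/2) + u ε * (W ε / 2) with hRdef
  have hkey : ∀ ε : ℝ, 0 < ε → (u ε)^2/4 ≤ P ε * R ε := by
    intro ε hε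
    have hαβsum : α ε + β ε = t₁ + t₂ + ε := by simp only [hαdef, hβdef]; ring
    have hαβprod : α ε * β ε = t₁*t₂ + ε*(t₁+t₂)/2 := by
      simp only [hαdef, hβdef]
      have := hS2 ε
      rw [hδdef] at this
      nlinarith [this]
    have hSne : S ε ≠ 0 := ne_of_gt (hSpos ε hε)
    have hfα : f (α ε) = u ε * α ε + v ε := by simp only [hvdef]; ring
    have hfβ : f (β ε) = u ε * β ε + v ε := by
      simp only [hvdef, hudef]
      have hαβ : α ε - β ε = S ε := by simp only [hαdef, hβdef]; ring
      field_simp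
      linear_combination (-1 : ℝ) * f (β ε) * hαβ + (u ε * S ε - f (α ε) + f (β ε)) * hαβ +
        0
    have hft1 : f t₁ = u' * t₁ + v' := by simp only [hv'def]; ring
    have hft2 : f t₂ = u' * t₂ + v' := by
      simp only [hv'def, hu'def]
      field_simp
      ring
    have hc := core t₁ t₂ ε (α ε) (β ε) (u ε) (v ε) u' v' ht₁ ht₂ hε
      (lt_trans ht₁ (hαgt ε hε)) (lt_trans ht₂ (hβgt ε hε))
      hαβsum hαβprod hfα hfβ hft1 hft2
    -- rewrite p, r
    have hα1 : α ε ≠ t₁ := ne_of_gt (hαgt ε hε)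
    have hβ2 : β ε ≠ t₂ := ne_of_gt (hβgt ε hε)
    have e1 : slope f t₁ (α ε) * (α ε - t₁) = f (α ε) - f t₁ := by
      rw [slope_def_field]
      exact div_mul_cancel₀ _ (sub_ne_zero.mpr hα1)
    have e2 : slope f t₂ (β ε) * (β ε - t₂) = f (β ε) - f t₂ := by
      rw [slope_def_field]
      exact div_mul_cancel₀ _ (sub_ne_zero.mpr hβ2)
    have hp : u ε * (t₁+ε/2) + v ε - f t₁ = ε * P ε := by
      have hv : v ε = f (α ε) - u ε * α ε := rfl
      rw [hv, hPdef]
      simp only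
      linear_combination (-1 : ℝ) * e1 + (slope f t₁ (α ε) - u ε) * (hαt ε hε)
    have hr : u ε * (t₂+ε/2) + v ε - f t₂ = ε * R ε := by
      have hv2 : v ε = f (β ε) - u ε * β ε := by linarith [hfβ]
      rw [hv2, hRdef]
      simp only
      linear_combination (-1 : ℝ) * e2 + (slope f t₂ (β ε) - u ε) * (hβt ε hε)
    rw [hp, hr] at hc
    have hε2 : (0:ℝ) < ε^2 := by positivity
    have hc2 : ε^2 * ((u ε)^2/4) ≤ ε^2 * (P ε * R ε) := by nlinarith [hc]
    exact (mul_le_mul_iff_right₀ hε2).mp hc2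
  -- limits
  have tendεid : Tendsto (fun ε : ℝ => ε) (𝓝[>] 0) (𝓝 0) :=
    (continuous_id.tendsto 0).mono_left nhdsWithin_le_nhds
  have tendS : Tendsto S (𝓝[>] (0:ℝ)) (𝓝 δ) := by
    have hco : Continuous S := by
      rw [hSdef]; fun_prop
    have h0 : S 0 = δ := by
      rw [hSdef]
      simp only
      rw [show δ^2 + (0:ℝ)^2 = δ^2 by ring]
      exact Real.sqrt_sq hδ.le
    have := (hco.tendsto 0).mono_left (nhdsWithin_le_nhds (s := Ioi (0:ℝ)))
    rwa [h0] at this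
  have tendα : Tendsto α (𝓝[>] (0:ℝ)) (𝓝 t₁) := by
    have h := ((tendsto_const_nhds (x := t₁ + t₂)).add tendεid).add tendS
    have h2 := h.div_const 2
    have heq : (t₁ + t₂ + 0 + δ)/2 = t₁ := by rw [hδdef]; ring
    rw [heq] at h2
    exact h2
  have tendβ : Tendsto β (𝓝[>] (0:ℝ)) (𝓝 t₂) := by
    have h := ((tendsto_const_nhds (x := t₁ + t₂)).add tendεid).sub tendS
    have h2 := h.div_const 2
    have heq : (t₁ + t₂ + 0 - δ)/2 = t₂ := by rw [hδdef]; ring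
    rw [heq] at h2
    exact h2
  have hfc1 : Tendsto (fun ε => f (α ε)) (𝓝[>] (0:ℝ)) (𝓝 (f t₁)) :=
    ((hdiff t₁ ht₁).continuousAt.tendsto).comp tendα
  have hfc2 : Tendsto (fun ε => f (β ε)) (𝓝[>] (0:ℝ)) (𝓝 (f t₂)) :=
    ((hdiff t₂ ht₂).continuousAt.tendsto).comp tendβ
  have tendu : Tendsto u (𝓝[>] (0:ℝ)) (𝓝 u') :=
    (hfc1.sub hfc2).div tendS (ne_of_gt hδ)
  have tendW : Tendsto W (𝓝[>] (0:ℝ)) (𝓝 0) := by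
    have h := tendεid.div (tendS.add (tendsto_const_nhds (x := δ))) (by positivity)
    have heq : (0:ℝ) / (δ + δ) = 0 := by simp
    rwa [heq] at h
  have tendslope1 : Tendsto (fun ε => slope f t₁ (α ε)) (𝓝[>] (0:ℝ)) (𝓝 (deriv f t₁)) := by
    have hd := (hdiff t₁ ht₁).hasDerivAt
    rw [hasDerivAt_iff_tendsto_slope] at hd
    refine hd.comp ?_
    rw [tendsto_nhdsWithin_iff]
    refine ⟨tendα, ?_⟩
    filter_upwards [self_mem_nhdsWithin] with ε hε
    exact (hαgt ε hε).ne'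
  have tendslope2 : Tendsto (fun ε => slope f t₂ (β ε)) (𝓝[>] (0:ℝ)) (𝓝 (deriv f t₂)) := by
    have hd := (hdiff t₂ ht₂).hasDerivAt
    rw [hasDerivAt_iff_tendsto_slope] at hd
    refine hd.comp ?_
    rw [tendsto_nhdsWithin_iff]
    refine ⟨tendβ, ?_⟩
    filter_upwards [self_mem_nhdsWithin] with ε hε
    exact (hβgt ε hε).ne'
  have tendP : Tendsto P (𝓝[>] (0:ℝ)) (𝓝 (deriv f t₁ / 2)) := by
    have h := (tendslope1.mul (((tendsto_const_nhds (x := (1:ℝ))).add tendW).div_const 2)).sub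
      (tendu.mul (tendW.div_const 2))
    have heq : deriv f t₁ * ((1 + 0)/2) - u' * (0/2) = deriv f t₁ / 2 := by ring
    rwa [heq] at h
  have tendR : Tendsto R (𝓝[>] (0:ℝ)) (𝓝 (deriv f t₂ / 2)) := by
    have h := (tendslope2.mul (((tendsto_const_nhds (x := (1:ℝ))).sub tendW).div_const 2)).add
      (tendu.mul (tendW.div_const 2))
    have heq : deriv f t₂ * ((1 - 0)/2) + u' * (0/2) = deriv f t₂ / 2 := by ring
    rwa [heq] at h
  have hfinal : u'^2/4 ≤ (deriv f t₁ / 2) * (deriv f t₂ / 2) := by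
    refine le_of_tendsto_of_tendsto ((tendu.pow 2).div_const 4) (tendP.mul tendR) ?_
    filter_upwards [self_mem_nhdsWithin] with ε hε
    exact hkey ε hε
  calc ((f t₁ - f t₂) / δ)^2 = u'^2 := by rw [hu'def]
    _ ≤ deriv f t₁ * deriv f t₂ := by nlinarith [hfinal]


end

/-- For a differentiable operator monotone `f : ℝ⁺ → ℝ⁺`, the squared divided
difference is dominated by `f'(t₁)·f'(t₂)`; hence `f'(1) = 0` forces `f` constant. -/
theorem divided_difference_sq_le_and_const (f : ℝ → ℝ)
    (hpos : ∀ x ∈ Ioi (0:ℝ), 0 < f x)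
    (hdiff : ∀ x ∈ Ioi (0:ℝ), DifferentiableAt ℝ f x)
    (hf : OperatorMonotonePos f) :
    (∀ t₁ t₂ : ℝ, 0 < t₁ → 0 < t₂ → t₁ ≠ t₂ →
        ((f t₁ - f t₂) / (t₁ - t₂)) ^ 2 ≤ deriv f t₁ * deriv f t₂) ∧
      (deriv f 1 = 0 → ∀ s : ℝ, 0 < s → ∀ t : ℝ, 0 < t → f s = f t) := by
  have hcore := core f hf
  have part1 : ∀ t₁ t₂ : ℝ, 0 < t₁ → 0 < t₂ → t₁ ≠ t₂ →
      ((f t₁ - f t₂) / (t₁ - t₂)) ^ 2 ≤ deriv f t₁ * deriv f t₂ := by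
    intro t₁ t₂ ht₁ ht₂ hne
    rcases lt_or_gt_of_ne hne with h | h
    · have := dd_sq_le_of_lt f hpos hdiff hcore t₂ t₁ ht₂ ht₁ h
      have heq : (f t₁ - f t₂) / (t₁ - t₂) = (f t₂ - f t₁) / (t₂ - t₁) := by
        rw [← neg_sub (f t₂) (f t₁), ← neg_sub t₂ t₁, neg_div_neg_eq]
      rw [heq]
      linarith [this, mul_comm (deriv f t₂) (deriv f t₁)]
    · exact dd_sq_le_of_lt f hpos hdiff hcore t₁ t₂ ht₁ ht₂ h
  refine ⟨part1, fun hd1 s hs t ht => ?_⟩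
  have hconst : ∀ r : ℝ, 0 < r → f r = f 1 := by
    intro r hr
    by_cases hr1 : r = 1
    · rw [hr1]
    · have h := part1 r 1 hr one_pos hr1
      rw [hd1, mul_zero] at h
      have hq : (f r - f 1) / (r - 1) = 0 := by
        have := sq_nonneg ((f r - f 1) / (r - 1))
        nlinarith [h, this]
      have hr1' : r - 1 ≠ 0 := sub_ne_zero.mpr hr1
      have : f r - f 1 = 0 := by
        rcases div_eq_zero_iff.mp hq with h' | h'
        · exact h'
        · exact absurd h' hr1'
      linarith
  rw [hconst s hs, hconst t ht]
end

section
/- For every λ ∈ [0,1], the function f_λ(t) = t/(λ + (1−λ)t) is operator monotone on ℝ⁺, and more generally, given a finite positive Borel measure μ on [0,1], the function f(t) = ∫_{[0,1]} t/(λ + (1−λ)t) dμ(λ) is operator monotone on ℝ⁺; f(1) = μ([0,1]). -/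
open Set

open MeasureTheory

section Auxiliary

open ContinuousLinearMap RCLike
open scoped InnerProductSpace
set_option synthInstance.maxHeartbeats 1000000
set_option maxHeartbeats 1000000

section OpHelpers
variable {H : Type} [NormedAddCommGroup H] [InnerProductSpace ℂ H] [CompleteSpace H]

omit [CompleteSpace H] in
lemma real_smul_op {T : H →L[ℂ] H} (c : ℝ) : c • T = (c : ℂ) • T := by
  rw [show ((c:ℂ)) = c • (1:ℂ) by simp [Complex.real_smul], smul_assoc, one_smul]

lemma opsmul_nonneg {T : H →L[ℂ] H} (h : 0 ≤ T) {c : ℝ} (hc : 0 ≤ c) : 0 ≤ c • T := by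
  rw [ContinuousLinearMap.nonneg_iff_isPositive] at h ⊢
  have hsa : IsSelfAdjoint (c • T) := by
    rw [real_smul_op, isSelfAdjoint_iff, star_smul, Complex.star_def, Complex.conj_ofReal,
      (ContinuousLinearMap.isSelfAdjoint_iff_isSymmetric.2 h.1).star_eq]
  refine ⟨ContinuousLinearMap.isSelfAdjoint_iff_isSymmetric.1 hsa, fun x => ?_⟩
  have hx : (c • T) x = (c : ℂ) • T x := by rw [real_smul_op]; rfl
  rw [ContinuousLinearMap.reApplyInnerSelf, hx, inner_smul_left, Complex.conj_ofReal]
  have hre : re ((c:ℂ) * ⟪T x, x⟫_ℂ) = c * re ⟪T x, x⟫_ℂ := by simp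
  rw [hre]
  have h2 := h.2 x
  rw [ContinuousLinearMap.reApplyInnerSelf] at h2
  exact mul_nonneg hc h2

lemma opsmul_le {S T : H →L[ℂ] H} (h : S ≤ T) {c : ℝ} (hc : 0 ≤ c) : c • S ≤ c • T := by
  have h2 := opsmul_nonneg (sub_nonneg.2 h) hc
  rw [smul_sub] at h2
  exact sub_nonneg.1 h2

lemma integral_op_nonneg {X : Type*} [MeasurableSpace X] {ν : Measure X}
    {D : X → H →L[ℂ] H} (hint : Integrable D ν) (hpos : ∀ x, 0 ≤ D x) :
    0 ≤ ∫ x, D x ∂ν := by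
  rw [ContinuousLinearMap.nonneg_iff_isPositive, ContinuousLinearMap.isPositive_iff_complex]
  intro v
  have h1 : (∫ x, D x ∂ν) v = ∫ x, D x v ∂ν := ContinuousLinearMap.integral_apply hint v
  have hDv : Integrable (fun x => D x v) ν := hint.apply_continuousLinearMap v
  have h2 : ∫ x, ⟪v, D x v⟫_ℂ ∂ν = ⟪v, ∫ x, D x v ∂ν⟫_ℂ := by
    have := (innerSL ℂ v).integral_comp_comm hDv
    simpa only [innerSL_apply_apply] using this
  have hDpos : ∀ x, (re ⟪D x v, v⟫_ℂ : ℂ) = ⟪D x v, v⟫_ℂ ∧ 0 ≤ re ⟪D x v, v⟫_ℂ := fun x =>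
    (ContinuousLinearMap.isPositive_iff_complex _ |>.mp
      (ContinuousLinearMap.nonneg_iff_isPositive _ |>.mp (hpos x))) v
  have key : ⟪(∫ x, D x ∂ν) v, v⟫_ℂ = ((∫ x, re ⟪D x v, v⟫_ℂ ∂ν : ℝ) : ℂ) := by
    rw [h1, ← inner_conj_symm, ← h2, ← integral_conj]
    rw [show ((((∫ x, re ⟪D x v, v⟫_ℂ ∂ν) : ℝ)) : ℂ) = ∫ x, ((re ⟪D x v, v⟫_ℂ : ℝ) : ℂ) ∂ν from
      (integral_ofReal (𝕜 := ℂ)).symm]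
    refine integral_congr_ae (.of_forall fun x => ?_)
    simp only [inner_conj_symm]
    exact ((hDpos x).1).symm
  refine ⟨?_, ?_⟩
  · rw [key]; norm_num
  · rw [key]
    have : re (((∫ x, re ⟪D x v, v⟫_ℂ ∂ν : ℝ)) : ℂ) = ∫ x, re ⟪D x v, v⟫_ℂ ∂ν := by norm_num
    rw [this]
    exact integral_nonneg fun x => (hDpos x).2

lemma integral_op_mono {X : Type*} [MeasurableSpace X] {ν : Measure X}
    {D E : X → H →L[ℂ] H} (hD : Integrable D ν) (hE : Integrable E ν)
    (h : ∀ x, D x ≤ E x) : ∫ x, D x ∂ν ≤ ∫ x, E x ∂ν := by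
  have h2 : (0 : H →L[ℂ] H) ≤ ∫ x, (E x - D x) ∂ν :=
    integral_op_nonneg (hE.sub hD) (fun x => sub_nonneg.2 (h x))
  rwa [integral_sub hE hD, sub_nonneg] at h2

end OpHelpers


section MonoPart
variable {H : Type} [NormedAddCommGroup H] [InnerProductSpace ℂ H] [CompleteSpace H]

lemma denom_pos {l t : ℝ} (h0 : 0 ≤ l) (h1 : l ≤ 1) (ht : 0 < t) : 0 < l + (1 - l) * t := by
  rcases eq_or_lt_of_le h0 with h|h
  · rw [← h]; simpa using ht
  · have h2 : 0 ≤ (1 - l) * t := mul_nonneg (by linarith) ht.le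
    linarith

lemma cfc_lowner_rep {l : ℝ} (hl0 : 0 ≤ l) (hl1 : l < 1)
    (a : H →L[ℂ] H) (ha : IsSelfAdjoint a) (hsa : spectrum ℝ a ⊆ Set.Ioi 0) :
    cfc (fun t => t / (l + (1 - l) * t)) a
      = (1 - l)⁻¹ • 1 - ((1 - l)⁻¹ * l) • cfc (fun t => (l + (1 - l) * t)⁻¹) a := by
  have hd : ∀ t ∈ spectrum ℝ a, 0 < l + (1 - l) * t := fun t ht => denom_pos hl0 hl1.le (hsa ht)
  have hcd : ContinuousOn (fun t : ℝ => l + (1 - l) * t) (spectrum ℝ a) := by fun_prop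
  have hcinv : ContinuousOn (fun t : ℝ => (l + (1 - l) * t)⁻¹) (spectrum ℝ a) :=
    hcd.inv₀ fun t ht => (hd t ht).ne'
  have heq : (spectrum ℝ a).EqOn (fun t => t / (l + (1 - l) * t))
      (fun t => (1 - l)⁻¹ - ((1 - l)⁻¹ * l) * (l + (1 - l) * t)⁻¹) := by
    intro t ht
    have h1 : l + (1 - l) * t ≠ 0 := (hd t ht).ne'
    have h2 : (1 : ℝ) - l ≠ 0 := by linarith
    field_simp
    have h1' : t - t * l + l ≠ 0 := by intro h; apply h1; linarith
    linear_combination mul_inv_cancel₀ h1'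
  rw [cfc_congr heq,
    cfc_sub _ (fun t => (1 - l)⁻¹ * l * (l + (1 - l) * t)⁻¹) a continuousOn_const (continuousOn_const.mul hcinv),
    cfc_const _ a ha, cfc_const_mul _ _ a hcinv, Algebra.algebraMap_eq_smul_one]

lemma cfc_lowner_inv_antitone {l : ℝ} (hl0 : 0 ≤ l) (hl1 : l < 1)
    (A B : H →L[ℂ] H) (hA : IsSelfAdjoint A) (hB : IsSelfAdjoint B)
    (hsA : spectrum ℝ A ⊆ Set.Ioi 0) (hsB : spectrum ℝ B ⊆ Set.Ioi 0) (hAB : A ≤ B) :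
    cfc (fun t => (l + (1 - l) * t)⁻¹) B ≤ cfc (fun t => (l + (1 - l) * t)⁻¹) A := by
  have key : ∀ (a : H →L[ℂ] H), IsSelfAdjoint a → spectrum ℝ a ⊆ Set.Ioi 0 →
      ∃ U : (H →L[ℂ] H)ˣ, (U : H →L[ℂ] H) = cfc (fun t : ℝ => l + (1 - l) * t) a ∧
        ((U⁻¹ : (H →L[ℂ] H)ˣ) : H →L[ℂ] H) = cfc (fun t : ℝ => (l + (1 - l) * t)⁻¹) a := by
    intro a ha hsa
    have hd : ∀ t ∈ spectrum ℝ a, 0 < l + (1 - l) * t := fun t ht => denom_pos hl0 hl1.le (hsa ht)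
    have hcd : ContinuousOn (fun t : ℝ => l + (1 - l) * t) (spectrum ℝ a) := by fun_prop
    have hcinv : ContinuousOn (fun t : ℝ => (l + (1 - l) * t)⁻¹) (spectrum ℝ a) :=
      hcd.inv₀ fun t ht => (hd t ht).ne'
    have huv : cfc (fun t : ℝ => l + (1 - l) * t) a * cfc (fun t : ℝ => (l + (1 - l) * t)⁻¹) a = 1 := by
      rw [← cfc_mul _ _ a hcd hcinv,
        cfc_congr (g := fun _ => (1:ℝ)) (fun t ht => mul_inv_cancel₀ (hd t ht).ne'), cfc_const 1 a ha, map_one]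
    have hvu : cfc (fun t : ℝ => (l + (1 - l) * t)⁻¹) a * cfc (fun t : ℝ => l + (1 - l) * t) a = 1 := by
      rw [← cfc_mul _ _ a hcinv hcd,
        cfc_congr (g := fun _ => (1:ℝ)) (fun t ht => inv_mul_cancel₀ (hd t ht).ne'), cfc_const 1 a ha, map_one]
    exact ⟨⟨_, _, huv, hvu⟩, rfl, rfl⟩
  obtain ⟨UA, hUA, hUAi⟩ := key A hA hsA
  obtain ⟨UB, hUB, hUBi⟩ := key B hB hsB
  have hUA0 : 0 ≤ (UA : H →L[ℂ] H) := by
    rw [hUA]; exact cfc_nonneg fun t ht => (denom_pos hl0 hl1.le (hsA ht)).le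
  have hrep : ∀ (a : H →L[ℂ] H), IsSelfAdjoint a →
      cfc (fun t : ℝ => l + (1 - l) * t) a = algebraMap ℝ (H →L[ℂ] H) l + (1 - l) • a := by
    intro a ha
    rw [cfc_add a _ _ continuousOn_const (by fun_prop), cfc_const _ a ha, cfc_const_mul_id _ a ha]
  have hle : (UA : H →L[ℂ] H) ≤ UB := by
    rw [hUA, hUB, hrep A hA, hrep B hB]
    exact add_le_add_right (opsmul_le hAB (by linarith)) _
  have := CStarAlgebra.inv_le_inv hUA0 hle
  rwa [hUAi, hUBi] at this

lemma cfc_lowner_mono {l : ℝ} (hl : l ∈ Set.Icc (0:ℝ) 1)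
    (A B : H →L[ℂ] H) (hA : IsSelfAdjoint A) (hB : IsSelfAdjoint B)
    (hsA : spectrum ℝ A ⊆ Set.Ioi 0) (hsB : spectrum ℝ B ⊆ Set.Ioi 0) (hAB : A ≤ B) :
    cfc (fun t => t / (l + (1 - l) * t)) A ≤ cfc (fun t => t / (l + (1 - l) * t)) B := by
  obtain ⟨hl0, hl1⟩ := hl
  rcases eq_or_lt_of_le hl1 with rfl|hl1'
  · have hfun : (fun t : ℝ => t / (1 + (1 - 1) * t)) = fun t : ℝ => t := by
      funext t; norm_num
    rw [hfun, cfc_id' ℝ A hA, cfc_id' ℝ B hB]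
    exact hAB
  · rw [cfc_lowner_rep hl0 hl1' A hA hsA, cfc_lowner_rep hl0 hl1' B hB hsB]
    apply sub_le_sub_left
    exact opsmul_le (cfc_lowner_inv_antitone hl0 hl1' A B hA hB hsA hsB hAB)
      (mul_nonneg (inv_nonneg.2 (by linarith)) hl0)

end MonoPart

lemma denom_pos' {l t : ℝ} (h0 : 0 ≤ l) (h1 : l ≤ 1) (ht : 0 < t) : 0 < l + (1 - l) * t := by
  rcases eq_or_lt_of_le h0 with h|h
  · rw [← h]; simpa using ht
  · have h2 : 0 ≤ (1 - l) * t := mul_nonneg (by linarith) ht.le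
    linarith

lemma cl_mem (l : ℝ) : max 0 (min 1 l) ∈ Set.Icc (0:ℝ) 1 :=
  ⟨le_max_left _ _, max_le zero_le_one (min_le_left _ _)⟩

lemma cl_eq {l : ℝ} (hl : l ∈ Set.Icc (0:ℝ) 1) : max 0 (min 1 l) = l := by
  rw [min_eq_right hl.2, max_eq_right hl.1]

lemma g_bound {c t M : ℝ} (hc0 : 0 ≤ c) (hc1 : c ≤ 1) (ht : 0 < t) (htM : t ≤ M) :
    t / (c + (1 - c) * t) ≤ max 1 M := by
  have hd := denom_pos' hc0 hc1 ht
  rw [div_le_iff₀ hd]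
  rcases le_total t 1 with h|h
  · have h1 : (1:ℝ) ≤ max 1 M := le_max_left _ _
    nlinarith [mul_nonneg hc0 (sub_nonneg.2 h)]
  · have hM : t ≤ max 1 M := le_trans htM (le_max_right _ _)
    nlinarith [mul_nonneg (sub_nonneg.2 hc1) (sub_nonneg.2 h)]

section Integ
variable {H : Type} [NormedAddCommGroup H] [InnerProductSpace ℂ H] [CompleteSpace H]

variable (a : H →L[ℂ] H)

lemma g'_continuousOn (l : ℝ) (hsa : spectrum ℝ a ⊆ Set.Ioi 0) :
    ContinuousOn (fun t => t / (max 0 (min 1 l) + (1 - max 0 (min 1 l)) * t)) (spectrum ℝ a) := by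
  apply ContinuousOn.div continuousOn_id (by fun_prop)
  intro t ht
  exact (denom_pos' (cl_mem l).1 (cl_mem l).2 (hsa ht)).ne'

lemma g'_uncurry_continuous (hsa : spectrum ℝ a ⊆ Set.Ioi 0) :
    Continuous (fun p : ℝ × spectrum ℝ a =>
      (p.2 : ℝ) / (max 0 (min 1 p.1) + (1 - max 0 (min 1 p.1)) * (p.2 : ℝ))) := by
  have hc : Continuous (fun p : ℝ × spectrum ℝ a => max 0 (min 1 p.1)) := by fun_prop
  have hv : Continuous (fun p : ℝ × spectrum ℝ a => (p.2 : ℝ)) :=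
    continuous_subtype_val.comp continuous_snd
  apply hv.div (hc.add (((continuous_const.sub hc)).mul hv))
  intro p
  exact (denom_pos' (cl_mem p.1).1 (cl_mem p.1).2 (hsa p.2.2)).ne'

lemma g'_norm_bound (hsa : spectrum ℝ a ⊆ Set.Ioi 0) (l : ℝ) :
    ∀ t ∈ spectrum ℝ a,
      ‖t / (max 0 (min 1 l) + (1 - max 0 (min 1 l)) * t)‖ ≤ ‖max 1 (‖a‖ * ‖(1 : H →L[ℂ] H)‖)‖ := by
  intro t ht
  have ht0 : 0 < t := hsa ht
  have hd := denom_pos' (cl_mem l).1 (cl_mem l).2 ht0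
  have htM : t ≤ ‖a‖ * ‖(1 : H →L[ℂ] H)‖ := (le_abs_self t).trans (spectrum.norm_le_norm_mul_of_mem ht)
  rw [Real.norm_eq_abs, Real.norm_eq_abs, abs_of_nonneg (div_nonneg ht0.le hd.le),
    abs_of_nonneg (le_trans zero_le_one (le_max_left _ _))]
  exact g_bound (cl_mem l).1 (cl_mem l).2 ht0 htM

lemma cfc_lowner_integrable (μ : Measure ℝ) [IsFiniteMeasure μ]
    (ha : IsSelfAdjoint a) (hsa : spectrum ℝ a ⊆ Set.Ioi 0) :
    Integrable (fun l => cfc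
      (fun t => t / (max 0 (min 1 l) + (1 - max 0 (min 1 l)) * t)) a)
      (μ.restrict (Set.Icc (0:ℝ) 1)) := by
  let G : C(ℝ × spectrum ℝ a, ℝ) := ⟨_, g'_uncurry_continuous a hsa⟩
  set F : ℝ → C(spectrum ℝ a, ℝ) := fun l => (ContinuousMap.curry G) l with hF
  have hFc : Continuous F := (ContinuousMap.curry G).continuous
  have hFi : Integrable F (μ.restrict (Set.Icc (0:ℝ) 1)) := by
    refine ⟨hFc.aestronglyMeasurable, ?_⟩
    refine (hasFiniteIntegral_const (‖max 1 (‖a‖ * ‖(1 : H →L[ℂ] H)‖)‖)).mono' (.of_forall fun l => ?_)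
    rw [ContinuousMap.norm_le _ (norm_nonneg _)]
    exact fun z => g'_norm_bound a hsa l z.1 z.2
  have heq : (fun l => cfc
      (fun t => t / (max 0 (min 1 l) + (1 - max 0 (min 1 l)) * t)) a)
      = fun l => cfcL (a := a) ha (F l) := by
    funext l
    rw [cfc_apply _ a ha (g'_continuousOn a l hsa), cfcL_apply]
    congr 1
  have h2 : Integrable (fun l => cfcL (a := a) ha (F l)) (μ.restrict (Set.Icc (0:ℝ) 1)) :=
    ContinuousLinearMap.integrable_comp _ hFi
  rw [heq]
  exact h2

lemma cfc_lowner_integral (μ : Measure ℝ) [IsFiniteMeasure μ]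
    (ha : IsSelfAdjoint a) (hsa : spectrum ℝ a ⊆ Set.Ioi 0)
    (f : ℝ → ℝ) (hf : ∀ t, f t = ∫ l in Set.Icc (0:ℝ) 1, t / (l + (1 - l) * t) ∂μ) :
    cfc f a = ∫ l in Set.Icc (0:ℝ) 1,
      cfc (fun t => t / (max 0 (min 1 l) + (1 - max 0 (min 1 l)) * t)) a ∂μ := by
  have hfeq : f = fun t => ∫ l in Set.Icc (0:ℝ) 1,
      t / (max 0 (min 1 l) + (1 - max 0 (min 1 l)) * t) ∂μ := by
    funext t
    rw [hf t]
    exact (setIntegral_congr_fun measurableSet_Icc fun l hl => by rw [cl_eq hl]).symm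
  rw [hfeq]
  exact cfc_integral (fun l t => t / (max 0 (min 1 l) + (1 - max 0 (min 1 l)) * t))
    (fun _ => ‖max 1 (‖a‖ * ‖(1 : H →L[ℂ] H)‖)‖) a
    (by
      apply ContinuousOn.div (f := fun p : ℝ × ℝ => p.2)
        (g := fun p : ℝ × ℝ => max 0 (min 1 p.1) + (1 - max 0 (min 1 p.1)) * p.2)
        (by fun_prop) (by fun_prop)
      intro p hp
      exact (denom_pos' (cl_mem p.1).1 (cl_mem p.1).2 (hsa hp.2)).ne')
    (.of_forall fun l => g'_norm_bound a hsa l) (hasFiniteIntegral_const _) ha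

end Integ


end Auxiliary

set_option synthInstance.maxHeartbeats 1000000 in
set_option maxHeartbeats 1000000 in
/-- Each `t ↦ t/(λ + (1−λ)t)`, `λ ∈ [0,1]`, is operator monotone on `ℝ⁺`; more
generally any integral of these against a finite positive Borel measure on `[0,1]`
is operator monotone, and `f(1) = μ([0,1])`. -/
theorem lowner_integrand_operatorMonotone :
    (∀ l ∈ Icc (0:ℝ) 1, OperatorMonotonePos (fun t => t / (l + (1 - l) * t))) ∧
      ∀ (μ : Measure ℝ), IsFiniteMeasure μ → μ (Icc (0:ℝ) 1)ᶜ = 0 →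
        ∀ f : ℝ → ℝ, (∀ t : ℝ, f t = ∫ l in Icc (0:ℝ) 1, t / (l + (1 - l) * t) ∂μ) →
          OperatorMonotonePos f ∧ f 1 = (μ (Icc (0:ℝ) 1)).toReal := by
  constructor
  · intro l hl H _ _ _ A B hA hB hsA hsB hAB
    exact cfc_lowner_mono hl A B hA hB hsA hsB hAB
  · intro μ hμ hμc f hf
    haveI := hμ
    constructor
    · intro H _ _ _ A B hA hB hsA hsB hAB
      rw [cfc_lowner_integral A μ hA hsA f hf, cfc_lowner_integral B μ hB hsB f hf]
      exact integral_op_mono (cfc_lowner_integrable A μ hA hsA)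
        (cfc_lowner_integrable B μ hB hsB)
        (fun l => cfc_lowner_mono (cl_mem l) A B hA hB hsA hsB hAB)
    · calc f 1 = ∫ l in Icc (0:ℝ) 1, (1:ℝ) ∂μ := by
            rw [hf 1]
            exact setIntegral_congr_fun measurableSet_Icc fun l _ => by
              rw [mul_one, show l + (1 - l) = 1 by ring, div_one]
        _ = (μ (Icc (0:ℝ) 1)).toReal := by
            rw [setIntegral_const, smul_eq_mul, mul_one, Measure.real]
end
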